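/- Fix a target τ ∈ [0,1] and define the below-target semi-variance of the MNL distribution by TSV_τ(v) = τ²/D(v) + Σ_{i∈S, r_i ≤ τ} (r_i − τ)² · v_i / D(v). Then (a) 0 ≤ TSV_τ(v) ≤ τ² for every v ∈ [0,1]^S; and (b) for all v ≤ v' in [0,1]^S, |TSV_τ(v') − TSV_τ(v)| ≤ (2τ²/D(v)) · Σ_{i∈S}(v'_i − v_i). -/

import Mathlib

/-- `D(v) = 1 + ∑_{i∈S} v i`, the MNL normalization constant. -/
noncomputable def mnlD {ι : Type*} (S : Finset ι) (v : ι → ℝ) : ℝ := 1 + ∑ i ∈ S, v i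

/-- The below-target semi-variance with target `τ` of the MNL purchase-profit distribution:
`TSV_τ(v) = τ²/D(v) + ∑_{i∈S, r i ≤ τ} (r i − τ)² v i / D(v)`. -/
noncomputable def mnlTSV {ι : Type*} (S : Finset ι) (r : ι → ℝ) (τ : ℝ) (v : ι → ℝ) : ℝ :=
  τ ^ 2 / mnlD S v + (∑ i ∈ S.filter (fun i => r i ≤ τ), (r i - τ) ^ 2 * v i) / mnlD S v

/-- **Proposition (below-target semi-variance: boundedness and Lipschitz condition).** -/
theorem tsv_bounded_and_lipschitz {ι : Type*} (S : Finset ι) (r : ι → ℝ)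
    (hr : ∀ i ∈ S, 0 < r i ∧ r i ≤ 1) (τ : ℝ) (hτ0 : 0 ≤ τ) (hτ1 : τ ≤ 1) :
    (∀ v : ι → ℝ, (∀ i ∈ S, 0 ≤ v i ∧ v i ≤ 1) →
      0 ≤ mnlTSV S r τ v ∧ mnlTSV S r τ v ≤ τ ^ 2) ∧
    (∀ v v' : ι → ℝ, (∀ i ∈ S, 0 ≤ v i ∧ v i ≤ 1) → (∀ i ∈ S, 0 ≤ v' i ∧ v' i ≤ 1) →
      (∀ i ∈ S, v i ≤ v' i) →
      |mnlTSV S r τ v' - mnlTSV S r τ v| ≤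
        (2 * τ ^ 2 / mnlD S v) * ∑ i ∈ S, (v' i - v i)) := by
  -- Key facts for any nonnegative v.
  have key : ∀ v : ι → ℝ, (∀ i ∈ S, 0 ≤ v i) →
      0 < mnlD S v ∧
      0 ≤ (∑ i ∈ S.filter (fun i => r i ≤ τ), (r i - τ) ^ 2 * v i) ∧
      τ ^ 2 + (∑ i ∈ S.filter (fun i => r i ≤ τ), (r i - τ) ^ 2 * v i) ≤ τ ^ 2 * mnlD S v := by
    intro v hv
    have hsum0 : 0 ≤ ∑ i ∈ S, v i := Finset.sum_nonneg hv
    have hD : 0 < mnlD S v := by unfold mnlD; linarith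
    refine ⟨hD, Finset.sum_nonneg ?_, ?_⟩
    · intro i hi
      exact mul_nonneg (sq_nonneg _) (hv i (Finset.mem_filter.mp hi).1)
    · have h1 : ∑ i ∈ S.filter (fun i => r i ≤ τ), (r i - τ) ^ 2 * v i
          ≤ ∑ i ∈ S.filter (fun i => r i ≤ τ), τ ^ 2 * v i := by
        apply Finset.sum_le_sum
        intro i hi
        obtain ⟨hiS, hle⟩ := Finset.mem_filter.mp hi
        have hri := hr i hiS
        have hb : (r i - τ) ^ 2 ≤ τ ^ 2 := by nlinarith [hri.1]
        exact mul_le_mul_of_nonneg_right hb (hv i hiS)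
      have h2 : ∑ i ∈ S.filter (fun i => r i ≤ τ), τ ^ 2 * v i ≤ ∑ i ∈ S, τ ^ 2 * v i := by
        apply Finset.sum_le_sum_of_subset_of_nonneg (Finset.filter_subset _ _)
        intro i hi _
        exact mul_nonneg (sq_nonneg _) (hv i hi)
      have h3 : τ ^ 2 * mnlD S v = τ ^ 2 + ∑ i ∈ S, τ ^ 2 * v i := by
        unfold mnlD; rw [mul_add, mul_one, Finset.mul_sum]
      linarith
  have hTSV : ∀ v : ι → ℝ, mnlTSV S r τ v =
      (τ ^ 2 + ∑ i ∈ S.filter (fun i => r i ≤ τ), (r i - τ) ^ 2 * v i) / mnlD S v := by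
    intro v; unfold mnlTSV; rw [← add_div]
  constructor
  · intro v hv
    obtain ⟨hD, hN0, hNle⟩ := key v (fun i hi => (hv i hi).1)
    rw [hTSV]
    constructor
    · exact div_nonneg (by nlinarith [sq_nonneg τ]) hD.le
    · rw [div_le_iff₀ hD]; linarith
  · intro v v' hv hv' hvv'
    obtain ⟨hD, hN0, hNle⟩ := key v (fun i hi => (hv i hi).1)
    obtain ⟨hD', hN0', hNle'⟩ := key v' (fun i hi => (hv' i hi).1)
    set N := τ ^ 2 + ∑ i ∈ S.filter (fun i => r i ≤ τ), (r i - τ) ^ 2 * v i with hNdef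
    set N' := τ ^ 2 + ∑ i ∈ S.filter (fun i => r i ≤ τ), (r i - τ) ^ 2 * v' i with hN'def
    set Δ := ∑ i ∈ S, (v' i - v i) with hΔdef
    have hΔ0 : 0 ≤ Δ := Finset.sum_nonneg (fun i hi => by linarith [hvv' i hi])
    have hDdiff : mnlD S v' - mnlD S v = Δ := by
      unfold mnlD; rw [hΔdef, Finset.sum_sub_distrib]; ring
    -- N' - N bounds
    have hNdiff : N' - N = ∑ i ∈ S.filter (fun i => r i ≤ τ), (r i - τ) ^ 2 * (v' i - v i) := by
      rw [hNdef, hN'def]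
      have he : ∑ i ∈ S.filter (fun i => r i ≤ τ), (r i - τ) ^ 2 * (v' i - v i)
          = ∑ i ∈ S.filter (fun i => r i ≤ τ),
              ((r i - τ) ^ 2 * v' i - (r i - τ) ^ 2 * v i) := by
        apply Finset.sum_congr rfl; intro i _; ring
      rw [he, Finset.sum_sub_distrib]; ring
    have hNd0 : 0 ≤ N' - N := by
      rw [hNdiff]
      apply Finset.sum_nonneg
      intro i hi
      exact mul_nonneg (sq_nonneg _) (by linarith [hvv' i (Finset.mem_filter.mp hi).1])
    have hNdle : N' - N ≤ τ ^ 2 * Δ := by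
      rw [hNdiff, hΔdef, Finset.mul_sum]
      calc ∑ i ∈ S.filter (fun i => r i ≤ τ), (r i - τ) ^ 2 * (v' i - v i)
          ≤ ∑ i ∈ S.filter (fun i => r i ≤ τ), τ ^ 2 * (v' i - v i) := by
            apply Finset.sum_le_sum
            intro i hi
            obtain ⟨hiS, hle⟩ := Finset.mem_filter.mp hi
            have hri := hr i hiS
            have hb : (r i - τ) ^ 2 ≤ τ ^ 2 := by nlinarith [hri.1]
            exact mul_le_mul_of_nonneg_right hb (by linarith [hvv' i hiS])
        _ ≤ ∑ i ∈ S, τ ^ 2 * (v' i - v i) := by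
            apply Finset.sum_le_sum_of_subset_of_nonneg (Finset.filter_subset _ _)
            intro i hi _
            exact mul_nonneg (sq_nonneg _) (by linarith [hvv' i hi])
    have hDleD' : mnlD S v ≤ mnlD S v' := by linarith
    have hNn : 0 ≤ N := by nlinarith [sq_nonneg τ]
    have hdiff : mnlTSV S r τ v' - mnlTSV S r τ v =
        (N' * mnlD S v - N * mnlD S v') / (mnlD S v * mnlD S v') := by
      rw [hTSV, hTSV, ← hNdef, ← hN'def]
      field_simp
    rw [hdiff, abs_div, abs_of_pos (mul_pos hD hD'),
      div_le_iff₀ (mul_pos hD hD')]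
    have hnum : |N' * mnlD S v - N * mnlD S v'| ≤ τ ^ 2 * Δ * mnlD S v := by
      rw [abs_le]
      constructor
      · nlinarith
      · nlinarith
    calc |N' * mnlD S v - N * mnlD S v'| ≤ τ ^ 2 * Δ * mnlD S v := hnum
      _ ≤ 2 * τ ^ 2 / mnlD S v * Δ * (mnlD S v * mnlD S v') := by
          rw [div_mul_eq_mul_div, div_mul_eq_mul_div, le_div_iff₀ hD]
          have ha : 0 ≤ τ ^ 2 * Δ := mul_nonneg (sq_nonneg τ) hΔ0
          have hb : τ ^ 2 * Δ * (mnlD S v * mnlD S v)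
              ≤ τ ^ 2 * Δ * (mnlD S v * mnlD S v') :=
            mul_le_mul_of_nonneg_left (mul_le_mul_of_nonneg_left hDleD' hD.le) ha
          nlinarith [hb, mul_nonneg ha (mul_pos hD hD').le]
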